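/- Let H be a bialgebra over a field k and suppose x, a ∈ H with a group-like (Δ(a)=a⊗a, ε(a)=1) and x a (1,a)-skew primitive (Δ(x)=1⊗x + x⊗a, ε(x)=0). Then for any q ∈ k, the subalgebra generated by x + qa is a right coideal: Δ maps it into (subalgebra) ⊗ H. -/

import Mathlib

open TensorProduct

theorem adjoin_skew_primitive_is_right_coideal
    {k H : Type*} [Field k] [Ring H] [Bialgebra k H]
    (a x : H)
    (ha : Coalgebra.comul (R := k) a = a ⊗ₜ[k] a)
    (haε : Coalgebra.counit (R := k) a = (1 : k))
    (hx : Coalgebra.comul (R := k) x = 1 ⊗ₜ[k] x + x ⊗ₜ[k] a)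
    (hxε : Coalgebra.counit (R := k) x = (0 : k))
    (q : k) :
    ∀ z ∈ Algebra.adjoin k {x + q • a},
      Coalgebra.comul (R := k) z ∈
        LinearMap.range (TensorProduct.map
          (Algebra.adjoin k {x + q • a}).toSubmodule.subtype
          (LinearMap.id : H →ₗ[k] H)) := by
  intro z hz
  set y := x + q • a with hy
  set S := Algebra.adjoin k {y} with hS
  have hyS : y ∈ S := Algebra.subset_adjoin rfl
  let f : S ⊗[k] H →ₐ[k] H ⊗[k] H := Algebra.TensorProduct.map S.val (AlgHom.id k H)
  have hfle : S ≤ Subalgebra.comap (Bialgebra.comulAlgHom k H) f.range := by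
    apply Algebra.adjoin_le
    rintro _ rfl
    show Bialgebra.comulAlgHom k H y ∈ f.range
    have hΔ : Coalgebra.comul (R := k) y = (1 : H) ⊗ₜ[k] x + y ⊗ₜ[k] a := by
      rw [hy, map_add, map_smul, hx, ha, smul_tmul', add_tmul]
      abel
    refine ⟨(1 : S) ⊗ₜ[k] x + (⟨y, hyS⟩ : S) ⊗ₜ[k] a, ?_⟩
    show f ((1 : S) ⊗ₜ[k] x + (⟨y, hyS⟩ : S) ⊗ₜ[k] a) = _
    rw [map_add f]
    simp only [f, Algebra.TensorProduct.map_tmul, AlgHom.coe_id, id_eq, Subalgebra.coe_val,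
      OneMemClass.coe_one]
    rw [Bialgebra.comulAlgHom_apply, hΔ]
  have key2 : ∀ w : S ⊗[k] H,
      f w = TensorProduct.map S.toSubmodule.subtype (LinearMap.id : H →ₗ[k] H) w := by
    intro w
    induction w using TensorProduct.induction_on with
    | zero => rw [map_zero f, map_zero]
    | tmul s h => simp [f]
    | add u v hu hv => rw [map_add f, map_add, hu, hv]
  obtain ⟨w, hw⟩ := hfle hz
  exact ⟨w, by rw [← key2 w]; exact hw⟩
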